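/- Let $k_0 \in \mathbb{R}$ and let $\varphi : [k_0, \infty) \to [0,\infty)$ be non-increasing. Suppose there exist constants $a, C > 0$ and $b > 1$ such that $\varphi(h) \le C (h-k)^{-a} \varphi(k)^b$ for all $h > k \ge k_0$. Then $\varphi(k_0 + d) = 0$, where $d = C^{1/a} \varphi(k_0)^{(b-1)/a} 2^{b/(b-1)}$. -/

import Mathlib

/-- Stampacchia's lemma, case `b > 1`. -/
theorem stampacchia_b_gt_one (k₀ : ℝ) (φ : ℝ → ℝ)
    (hφ_nonneg : ∀ h, k₀ ≤ h → 0 ≤ φ h)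
    (hφ_mono : ∀ h k, k₀ ≤ k → k ≤ h → φ h ≤ φ k)
    (a C b : ℝ) (ha : 0 < a) (hC : 0 < C) (hb : 1 < b)
    (hineq : ∀ h k, k₀ ≤ k → k < h → φ h ≤ C / (h - k) ^ a * (φ k) ^ b) :
    φ (k₀ + C ^ (1 / a) * (φ k₀) ^ ((b - 1) / a) * 2 ^ (b / (b - 1))) = 0 := by
  set P := φ k₀ with hPdef
  have hP0 : 0 ≤ P := hφ_nonneg k₀ le_rfl
  have hb1 : (0:ℝ) < b - 1 := by linarith
  rcases eq_or_lt_of_le hP0 with hP | hP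
  · -- φ k₀ = 0
    have : P ^ ((b - 1) / a) = 0 := by
      rw [← hP, Real.zero_rpow (by positivity)]
    rw [this, mul_zero, zero_mul, add_zero, ← hPdef, ← hP]
  · set d := C ^ (1 / a) * P ^ ((b - 1) / a) * 2 ^ (b / (b - 1)) with hd
    have hdpos : 0 < d := by positivity
    set r := a / (b - 1) with hr
    have hrpos : 0 < r := by positivity
    have h2 : (0:ℝ) < 2 := by norm_num
    -- d ^ a = C * P ^ (b-1) * 2 ^ (a*b/(b-1))
    have hda : d ^ a = C * P ^ (b - 1) * 2 ^ (a * b / (b - 1)) := by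
      rw [hd, Real.mul_rpow (by positivity) (by positivity),
        Real.mul_rpow (by positivity) (by positivity),
        ← Real.rpow_mul hC.le, ← Real.rpow_mul hP0, ← Real.rpow_mul h2.le,
        one_div, inv_mul_cancel₀ ha.ne', Real.rpow_one,
        div_mul_cancel₀ _ ha.ne']
      congr 1
      field_simp
    -- the sequence
    set k : ℕ → ℝ := fun n => k₀ + d - d * 2 ^ (-(n:ℝ)) with hk
    have hk0 : k 0 = k₀ := by simp [hk]
    have hkle : ∀ n : ℕ, k₀ ≤ k n := by
      intro n
      have h1 : (2:ℝ) ^ (-(n:ℝ)) ≤ 1 := by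
        rw [← Real.rpow_zero 2]
        exact Real.rpow_le_rpow_of_exponent_le (by norm_num)
          (neg_nonpos.mpr (Nat.cast_nonneg n))
      have : d * 2 ^ (-(n:ℝ)) ≤ d := by nlinarith
      simp only [hk]; linarith
    have hgap : ∀ n : ℕ, k (n+1) - k n = d * 2 ^ (-((n:ℝ)+1)) := by
      intro n
      have : (2:ℝ) ^ (-(n:ℝ)) = 2 ^ (-((n:ℝ)+1)) * 2 := by
        rw [← Real.rpow_add_one (by norm_num : (2:ℝ) ≠ 0) (-((n:ℝ)+1))]
        norm_num
      simp only [hk]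
      push_cast
      rw [this]
      ring
    have hklt : ∀ n : ℕ, k n < k (n+1) := by
      intro n
      have := hgap n
      have hp : 0 < d * (2:ℝ) ^ (-((n:ℝ)+1)) := by positivity
      linarith
    -- key algebraic identity
    have key : ∀ n : ℕ, C / (d * 2 ^ (-((n:ℝ)+1))) ^ a * (P * 2 ^ (-(r * n))) ^ b
        = P * 2 ^ (-(r * ((n:ℝ)+1))) := by
      intro n
      rw [Real.mul_rpow hdpos.le (by positivity), Real.mul_rpow hP0 (by positivity),
        ← Real.rpow_mul h2.le, ← Real.rpow_mul h2.le, hda]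
      have hPb : P ^ b = P ^ (b-1) * P := by
        nth_rewrite 1 [show b = (b-1) + 1 by ring]
        rw [Real.rpow_add hP, Real.rpow_one]
      rw [hPb, div_mul_eq_mul_div, div_eq_iff (by positivity)]
      have hZ : (2:ℝ) ^ (-(r * (n:ℝ)) * b)
          = 2 ^ (-(r * ((n:ℝ)+1))) * 2 ^ (a * b / (b - 1)) * 2 ^ (-((n:ℝ)+1) * a) := by
        rw [← Real.rpow_add h2, ← Real.rpow_add h2]
        congr 1
        rw [hr]
        field_simp
        ring
      rw [hZ]
      ring
    -- induction bound
    have bound : ∀ n : ℕ, φ (k n) ≤ P * 2 ^ (-(r * n)) := by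
      intro n
      induction n with
      | zero => simp [hk0]; exact le_of_eq hPdef.symm
      | succ n ih =>
        have h1 := hineq (k (n+1)) (k n) (hkle n) (hklt n)
        rw [hgap n] at h1
        have h2' : φ (k n) ^ b ≤ (P * 2 ^ (-(r * n))) ^ b :=
          Real.rpow_le_rpow (hφ_nonneg _ (hkle n)) ih (by linarith)
        have h3 : C / (d * 2 ^ (-((n:ℝ)+1))) ^ a * φ (k n) ^ b
            ≤ C / (d * 2 ^ (-((n:ℝ)+1))) ^ a * (P * 2 ^ (-(r * n))) ^ b := by
          apply mul_le_mul_of_nonneg_left h2' (by positivity)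
        calc φ (k (n+1)) ≤ _ := h1
          _ ≤ _ := h3
          _ = P * 2 ^ (-(r * ((n:ℝ)+1))) := key n
          _ = P * 2 ^ (-(r * ((n+1:ℕ):ℝ))) := by push_cast; ring_nf
    -- conclude by limit
    have hle : ∀ n : ℕ, φ (k₀ + d) ≤ P * 2 ^ (-(r * n)) := by
      intro n
      refine le_trans (hφ_mono _ _ (hkle n) ?_) (bound n)
      have : (0:ℝ) ≤ d * 2 ^ (-(n:ℝ)) := by positivity
      simp only [hk]; linarith
    have htend : Filter.Tendsto (fun n : ℕ => P * 2 ^ (-(r * n))) Filter.atTop (nhds 0) := by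
      have heq : ∀ n : ℕ, P * 2 ^ (-(r * n)) = P * ((2:ℝ) ^ (-r)) ^ n := by
        intro n
        rw [← Real.rpow_natCast ((2:ℝ) ^ (-r)) n, ← Real.rpow_mul h2.le]
        ring_nf
      simp only [heq]
      rw [show (0:ℝ) = P * 0 by ring]
      exact Filter.Tendsto.const_mul P
        (tendsto_pow_atTop_nhds_zero_of_lt_one (by positivity)
          (Real.rpow_lt_one_of_one_lt_of_neg (by norm_num) (by linarith)))
    have h1 : φ (k₀ + d) ≤ 0 := ge_of_tendsto' htend hle
    have h2' : 0 ≤ φ (k₀ + d) := hφ_nonneg _ (by linarith)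
    linarith
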